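/- If Π is an orthogonal projection and |ψ⟩ a unit vector with ‖|ψ⟩⟨ψ| − Π|ψ⟩⟨ψ|Π‖₁ ≤ ε, then ‖|ψ⟩ − Π|ψ⟩‖ ≤ ε. -/

import Mathlib

open Matrix
open scoped ComplexOrder

lemma psd_sqrt_spec {n : Type*} [Fintype n] [DecidableEq n] {H : Matrix n n ℂ}
    (hH : H.PosSemidef) :
    ((hH.1.eigenvectorUnitary : Matrix n n ℂ) *
      diagonal (((↑) : ℝ → ℂ) ∘ Real.sqrt ∘ hH.1.eigenvalues) *
      (star (hH.1.eigenvectorUnitary : Matrix n n ℂ))).PosSemidef ∧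
    (hH.1.eigenvectorUnitary : Matrix n n ℂ) *
      diagonal (((↑) : ℝ → ℂ) ∘ Real.sqrt ∘ hH.1.eigenvalues) *
      (star (hH.1.eigenvectorUnitary : Matrix n n ℂ)) *
    ((hH.1.eigenvectorUnitary : Matrix n n ℂ) *
      diagonal (((↑) : ℝ → ℂ) ∘ Real.sqrt ∘ hH.1.eigenvalues) *
      (star (hH.1.eigenvectorUnitary : Matrix n n ℂ))) = H := by
  set U : Matrix n n ℂ := (hH.1.eigenvectorUnitary : Matrix n n ℂ) with hU
  have hUU : star U * U = 1 := Unitary.star_mul_self_of_mem hH.1.eigenvectorUnitary.2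
  constructor
  · rw [star_eq_conjTranspose]
    apply PosSemidef.mul_mul_conjTranspose_same
    rw [posSemidef_diagonal_iff]
    intro i
    simp only [Function.comp_apply, Complex.zero_le_real]
    exact Real.sqrt_nonneg _
  · have hspec := hH.1.spectral_theorem
    rw [Unitary.conjStarAlgAut_apply] at hspec
    conv_rhs => rw [hspec]
    rw [← hU]
    calc U * diagonal (((↑) : ℝ → ℂ) ∘ Real.sqrt ∘ hH.1.eigenvalues) * star U *
        (U * diagonal (((↑) : ℝ → ℂ) ∘ Real.sqrt ∘ hH.1.eigenvalues) * star U)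
        = U * (diagonal (((↑) : ℝ → ℂ) ∘ Real.sqrt ∘ hH.1.eigenvalues) * (star U * U) *
          diagonal (((↑) : ℝ → ℂ) ∘ Real.sqrt ∘ hH.1.eigenvalues)) * star U := by
          simp only [Matrix.mul_assoc]
      _ = _ := by
        rw [hUU, Matrix.mul_one, diagonal_mul_diagonal]
        congr 3
        funext i
        simp only [Function.comp_apply]
        rw [← Complex.ofReal_mul, Real.mul_self_sqrt (hH.eigenvalues_nonneg i)]
        rfl

lemma cs_sum {n : Type*} [Fintype n] (a b : n → ℂ) :
    ‖∑ i, (starRingEnd ℂ) (a i) * b i‖ ≤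
      Real.sqrt (∑ i, ‖a i‖ ^ 2) * Real.sqrt (∑ i, ‖b i‖ ^ 2) := by
  have h := @norm_inner_le_norm ℂ (EuclideanSpace ℂ n) _ _ _
      ((WithLp.equiv 2 _).symm a) ((WithLp.equiv 2 _).symm b)
  simpa [PiLp.inner_apply, EuclideanSpace.norm_eq, RCLike.inner_apply, mul_comm] using h

lemma sum_norm_sq_dot {n : Type*} [Fintype n] (y : n → ℂ) :
    (↑(∑ i, ‖y i‖ ^ 2) : ℂ) = star y ⬝ᵥ y := by
  simp [dotProduct, Complex.conj_mul']

lemma frob_sq {n : Type*} [Fintype n] (M : Matrix n n ℂ) (x : n → ℂ) :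
    ∑ i, ‖M.mulVec x i‖ ^ 2 ≤ (∑ i, ∑ j, ‖M i j‖ ^ 2) * (∑ i, ‖x i‖ ^ 2) := by
  have key : ∀ i, ‖M.mulVec x i‖ ^ 2 ≤ (∑ j, ‖M i j‖ ^ 2) * (∑ j, ‖x j‖ ^ 2) := by
    intro i
    have h := cs_sum (fun j => (starRingEnd ℂ) (M i j)) x
    simp only [RingHomCompTriple.comp_apply, RingHom.id_apply, starRingEnd_self_apply,
      Complex.norm_conj] at h
    have h2 : M.mulVec x i = ∑ j, M i j * x j := rfl
    have hb : (0:ℝ) ≤ Real.sqrt (∑ j, ‖M i j‖ ^ 2) * Real.sqrt (∑ j, ‖x j‖ ^ 2) :=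
      mul_nonneg (Real.sqrt_nonneg _) (Real.sqrt_nonneg _)
    calc ‖M.mulVec x i‖ ^ 2
        ≤ (Real.sqrt (∑ j, ‖M i j‖ ^ 2) * Real.sqrt (∑ j, ‖x j‖ ^ 2)) ^ 2 := by
          rw [h2]
          exact pow_le_pow_left₀ (norm_nonneg _) h 2
      _ = (∑ j, ‖M i j‖ ^ 2) * (∑ j, ‖x j‖ ^ 2) := by
          rw [mul_pow, Real.sq_sqrt, Real.sq_sqrt] <;>
            positivity
  calc ∑ i, ‖M.mulVec x i‖ ^ 2 ≤ ∑ i, (∑ j, ‖M i j‖ ^ 2) * (∑ j, ‖x j‖ ^ 2) :=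
        Finset.sum_le_sum fun i _ => key i
    _ = (∑ i, ∑ j, ‖M i j‖ ^ 2) * (∑ i, ‖x i‖ ^ 2) := by rw [Finset.sum_mul]

lemma herm_trace_frob {n : Type*} [Fintype n] {B : Matrix n n ℂ} (hB : B.IsHermitian) :
    ∑ i, ∑ j, ‖B i j‖ ^ 2 = ((B * B).trace).re := by
  have : (B * B).trace = ↑(∑ i, ∑ j, ‖B i j‖ ^ 2) := by
    simp only [Matrix.trace, Matrix.diag, Matrix.mul_apply]
    push_cast
    congr 1; ext i; congr 1; ext j
    rw [← hB.apply i j]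
    simp [RCLike.star_def, Complex.normSq_eq_conj_mul_self,
      Complex.norm_conj, Complex.sq_norm, Complex.normSq_conj]
    rw [mul_comm, Complex.mul_conj, Complex.normSq_eq_norm_sq]
    push_cast
    ring
  rw [this, Complex.ofReal_re]

lemma dot_conjTranspose_mul {n : Type*} [Fintype n] (M : Matrix n n ℂ) (x : n → ℂ) :
    (↑(∑ i, ‖M.mulVec x i‖ ^ 2) : ℂ) = star x ⬝ᵥ (Mᴴ * M).mulVec x := by
  rw [sum_norm_sq_dot (M.mulVec x), star_mulVec, ← mulVec_mulVec]
  simp only [dotProduct_mulVec]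

lemma psd_norm_mulVec_le {n : Type*} [Fintype n] [DecidableEq n] {S : Matrix n n ℂ}
    (hS : S.PosSemidef) (x : n → ℂ) :
    ∑ i, ‖S.mulVec x i‖ ^ 2 ≤ S.trace.re ^ 2 * ∑ i, ‖x i‖ ^ 2 := by
  set B := (hS.1.eigenvectorUnitary : Matrix n n ℂ) *
      diagonal (((↑) : ℝ → ℂ) ∘ Real.sqrt ∘ hS.1.eigenvalues) *
      (star (hS.1.eigenvectorUnitary : Matrix n n ℂ)) with hBdef
  have hBh : B.IsHermitian := (psd_sqrt_spec hS).1.isHermitian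
  have hBB : B * B = S := (psd_sqrt_spec hS).2
  have hT : ∑ i, ∑ j, ‖B i j‖ ^ 2 = S.trace.re := by rw [herm_trace_frob hBh, hBB]
  have hT0 : 0 ≤ S.trace.re := by
    rw [← hT]; positivity
  have hS' : S.mulVec x = B.mulVec (B.mulVec x) := by rw [mulVec_mulVec, hBB]
  calc ∑ i, ‖S.mulVec x i‖ ^ 2 = ∑ i, ‖B.mulVec (B.mulVec x) i‖ ^ 2 := by rw [hS']
    _ ≤ (∑ i, ∑ j, ‖B i j‖ ^ 2) * ∑ i, ‖B.mulVec x i‖ ^ 2 := frob_sq B _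
    _ ≤ (∑ i, ∑ j, ‖B i j‖ ^ 2) * ((∑ i, ∑ j, ‖B i j‖ ^ 2) * ∑ i, ‖x i‖ ^ 2) := by
        apply mul_le_mul_of_nonneg_left (frob_sq B x)
        positivity
    _ = S.trace.re ^ 2 * ∑ i, ‖x i‖ ^ 2 := by rw [hT]; ring

lemma psd_trace_re_nonneg {n : Type*} [Fintype n] [DecidableEq n] {S : Matrix n n ℂ}
    (hS : S.PosSemidef) : 0 ≤ S.trace.re := by
  have hBh : Matrix.IsHermitian ((hS.1.eigenvectorUnitary : Matrix n n ℂ) *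
      diagonal (((↑) : ℝ → ℂ) ∘ Real.sqrt ∘ hS.1.eigenvalues) *
      (star (hS.1.eigenvectorUnitary : Matrix n n ℂ))) := (psd_sqrt_spec hS).1.isHermitian
  have := herm_trace_frob hBh
  rw [(psd_sqrt_spec hS).2] at this
  rw [← this]; positivity

noncomputable def traceNorm {n : Type*} [Fintype n] [DecidableEq n] (A : Matrix n n ℂ) : ℝ :=
  (((Matrix.posSemidef_conjTranspose_mul_self A).1.eigenvectorUnitary : Matrix n n ℂ) *
      diagonal (((↑) : ℝ → ℂ) ∘ Real.sqrt ∘ (Matrix.posSemidef_conjTranspose_mul_self A).1.eigenvalues) *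
      (star ((Matrix.posSemidef_conjTranspose_mul_self A).1.eigenvectorUnitary : Matrix n n ℂ))).trace.re

/-- If `‖|ψ⟩⟨ψ| - Π|ψ⟩⟨ψ|Π‖₁ ≤ ε` for a projection `Π` and a unit vector `ψ`, then
`‖ψ - Πψ‖ ≤ ε`. -/
theorem vector_close_of_traceNorm_close {n : Type*} [Fintype n] [DecidableEq n]
    (P : Matrix n n ℂ) (ψ : n → ℂ) (ε : ℝ)
    (hPh : P.IsHermitian) (hP2 : P * P = P)
    (hψ : ∑ i, ‖ψ i‖ ^ 2 = 1)
    (hε : traceNorm (vecMulVec ψ (star ψ) - P * vecMulVec ψ (star ψ) * P) ≤ ε) :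
    Real.sqrt (∑ i, ‖ψ i - P.mulVec ψ i‖ ^ 2) ≤ ε := by
  set A : Matrix n n ℂ := vecMulVec ψ (star ψ) - P * vecMulVec ψ (star ψ) * P with hAdef
  set S : Matrix n n ℂ := ((Matrix.posSemidef_conjTranspose_mul_self A).1.eigenvectorUnitary : Matrix n n ℂ) *
      diagonal (((↑) : ℝ → ℂ) ∘ Real.sqrt ∘ (Matrix.posSemidef_conjTranspose_mul_self A).1.eigenvalues) *
      (star ((Matrix.posSemidef_conjTranspose_mul_self A).1.eigenvectorUnitary : Matrix n n ℂ)) with hSdef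
  have hSpsd : S.PosSemidef := (psd_sqrt_spec (Matrix.posSemidef_conjTranspose_mul_self A)).1
  have hSS : S * S = Aᴴ * A := (psd_sqrt_spec (Matrix.posSemidef_conjTranspose_mul_self A)).2
  set T : ℝ := S.trace.re with hTdef
  have hTN : traceNorm A = T := rfl
  have hT0 : 0 ≤ T := psd_trace_re_nonneg hSpsd
  have hε' : T ≤ ε := by rw [← hTN]; exact hε
  have hε0 : 0 ≤ ε := le_trans hT0 hε'
  set a : n → ℂ := P.mulVec ψ with hadef
  set b : n → ℂ := fun i => ψ i - a i with hbdef
  set s : ℝ := ∑ i, ‖b i‖ ^ 2 with hsdef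
  show Real.sqrt s ≤ ε
  have hs0 : 0 ≤ s := by positivity
  have hψ1 : star ψ ⬝ᵥ ψ = 1 := by
    rw [← sum_norm_sq_dot ψ, hψ, Complex.ofReal_one]
  set c : ℂ := star ψ ⬝ᵥ a with hcdef
  have hvmv : ∀ y : n → ℂ, (vecMulVec ψ (star ψ)).mulVec y = (star ψ ⬝ᵥ y) • ψ := by
    intro y; ext i
    show (∑ j, vecMulVec ψ (star ψ) i j * y j) = (∑ j, star ψ j * y j) * ψ i
    rw [Finset.sum_mul]
    refine Finset.sum_congr rfl fun j _ => ?_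
    rw [vecMulVec_apply]; ring
  have hAψ : A.mulVec ψ = ψ - c • a := by
    rw [hAdef, sub_mulVec, hvmv, hψ1, one_smul, ← mulVec_mulVec, ← mulVec_mulVec,
      hvmv, mulVec_smul]
  have hstar_a : star a = star ψ ᵥ* P := by
    rw [hadef, star_mulVec, hPh]
  have haa : star a ⬝ᵥ a = c := by
    rw [hstar_a, ← dotProduct_mulVec, hadef, mulVec_mulVec, hP2]
  have hba : star b ⬝ᵥ a = 0 := by
    have : star b = fun i => star ψ i - star a i := by
      ext i; simp [hbdef]
    rw [this]
    have : (fun i => star ψ i - star a i) ⬝ᵥ a = star ψ ⬝ᵥ a - star a ⬝ᵥ a :=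
      sub_dotProduct _ _ _
    rw [this, haa, hcdef, sub_self]
  have hbb : star b ⬝ᵥ b = (s : ℂ) := (sum_norm_sq_dot b).symm
  have hbψ : star b ⬝ᵥ ψ = (s : ℂ) := by
    have hψba : ψ = fun i => b i + a i := by ext i; simp [hbdef]
    calc star b ⬝ᵥ ψ = star b ⬝ᵥ (fun i => b i + a i) := by rw [← hψba]
      _ = star b ⬝ᵥ b + star b ⬝ᵥ a := dotProduct_add _ _ _
      _ = (s : ℂ) := by rw [hbb, hba, add_zero]
  have hkey : star b ⬝ᵥ A.mulVec ψ = (s : ℂ) := by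
    rw [hAψ, dotProduct_sub, dotProduct_smul, hba, smul_zero, sub_zero, hbψ]
  have hcs := cs_sum b (A.mulVec ψ)
  have hdp : ∑ i, (starRingEnd ℂ) (b i) * A.mulVec ψ i = star b ⬝ᵥ A.mulVec ψ := rfl
  rw [hdp, hkey] at hcs
  rw [Complex.norm_real, Real.norm_eq_abs, abs_of_nonneg hs0, ← hsdef] at hcs
  have hAS : ∑ i, ‖A.mulVec ψ i‖ ^ 2 = ∑ i, ‖S.mulVec ψ i‖ ^ 2 := by
    have h1 := dot_conjTranspose_mul A ψ
    have h2 := dot_conjTranspose_mul S ψ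
    rw [hSpsd.isHermitian, hSS] at h2
    exact_mod_cast h1.trans h2.symm
  have hSb : ∑ i, ‖S.mulVec ψ i‖ ^ 2 ≤ T ^ 2 := by
    have h := psd_norm_mulVec_le hSpsd ψ
    rw [hψ, mul_one] at h
    exact h
  have h3 : Real.sqrt (∑ i, ‖A.mulVec ψ i‖ ^ 2) ≤ T := by
    rw [hAS]
    calc Real.sqrt (∑ i, ‖S.mulVec ψ i‖ ^ 2) ≤ Real.sqrt (T ^ 2) := Real.sqrt_le_sqrt hSb
      _ = T := Real.sqrt_sq hT0
  rcases eq_or_lt_of_le hs0 with h | h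
  · rw [← h, Real.sqrt_zero]; exact hε0
  · have h4 : Real.sqrt s * Real.sqrt s ≤ Real.sqrt s * T := by
      calc Real.sqrt s * Real.sqrt s = s := Real.mul_self_sqrt hs0
        _ ≤ Real.sqrt s * Real.sqrt (∑ i, ‖A.mulVec ψ i‖ ^ 2) := hcs
        _ ≤ Real.sqrt s * T := mul_le_mul_of_nonneg_left h3 (Real.sqrt_nonneg s)
    have h5 : Real.sqrt s ≤ T :=
      le_of_mul_le_mul_left h4 (Real.sqrt_pos.mpr h)
    linarith
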